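/- Let c > 0 and let f be a continuous probability density on [0,c] with f(v) > 0 for all v ∈ [0,c] and with monotone hazard rate. Suppose x : [0,1] → [0,1] is continuous and convex, that for every l ∈ [0,1] the value x(l) maximizes g_f(·,l) over [0,1] (with g_f(0,l) = 0), and that x(l) < 1 for every l < 1. Then x is strictly increasing on [0,1]. -/

import Mathlib

open MeasureTheory Set intervalIntegral

/-- Expected revenue `g_f(x,l)` of the two-bidder click-through auction with CTR pair
`(1,l)`, i.i.d. values with density `f` on `[0,c]`, and signal ratio `s₂/s₁ = x`.
(Note that `gRev c f 0 l = 0`, the extension to `x = 0` by the value `0`.) -/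
noncomputable def gRev (c : ℝ) (f : ℝ → ℝ) (x l : ℝ) : ℝ :=
  (∫ v in (0 : ℝ)..c, v * x * (∫ u in (v * x)..c, f u) * f v)
  + l * ∫ v in (0 : ℝ)..(c * x), (v / x) * (∫ u in (v / x)..c, f u) * f v

namespace OptSigAux

/-- Survival function `G(t) = ∫_t^c g`. -/
noncomputable def Gf (c : ℝ) (g : ℝ → ℝ) (t : ℝ) : ℝ := ∫ u in t..c, g u

/-- First revenue term. -/
noncomputable def Av (c : ℝ) (g : ℝ → ℝ) (y : ℝ) : ℝ :=
  ∫ v in (0:ℝ)..c, v * y * Gf c g (v * y) * g v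

/-- Second revenue term, after substitution and integration by parts. -/
noncomputable def Bv (c : ℝ) (g : ℝ → ℝ) (y : ℝ) : ℝ :=
  ∫ t in (0:ℝ)..c, Gf c g (t * y) * (Gf c g t - t * g t)

/-- Derivative of `Av`. -/
noncomputable def Av' (c : ℝ) (g : ℝ → ℝ) (y : ℝ) : ℝ :=
  ∫ t in (0:ℝ)..c, (t * Gf c g (t * y) - t ^ 2 * y * g (t * y)) * g t

/-- Derivative of `Bv`. -/
noncomputable def Jv (c : ℝ) (g : ℝ → ℝ) (y : ℝ) : ℝ :=
  ∫ t in (0:ℝ)..c, (t * g (t * y)) * (t * g t - Gf c g t)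

variable {c : ℝ} {g : ℝ → ℝ}

lemma hasDerivAt_Gf (hg : Continuous g) (t : ℝ) :
    HasDerivAt (Gf c g) (-g t) t := by
  have hfun : Gf c g = fun s => -∫ u in c..s, g u := by
    funext s
    show (∫ u in s..c, g u) = -∫ u in c..s, g u
    exact integral_symm c s
  rw [hfun]
  exact ((hg.integral_hasStrictDerivAt c t).hasDerivAt).neg

lemma cont_Gf (hg : Continuous g) : Continuous (Gf c g) :=
  continuous_iff_continuousAt.2 fun t => (hasDerivAt_Gf hg t).differentiableAt.continuousAt

lemma Gf_nonneg (hg0 : ∀ u, 0 ≤ g u) {t : ℝ} (ht : t ≤ c) :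
    0 ≤ Gf c g t :=
  integral_nonneg ht fun u _ => hg0 u

lemma Gf_pos (hg : Continuous g) (hg0 : ∀ u, 0 < g u) {t : ℝ} (ht : t < c) :
    0 < Gf c g t :=
  intervalIntegral_pos_of_pos (hg.intervalIntegrable t c) hg0 ht

lemma Gf_c : Gf c g c = 0 := integral_same

/-- Differentiation under the interval integral for jointly continuous data. -/
lemma hasDerivAt_param {F F' : ℝ → ℝ → ℝ}
    (hF : Continuous fun p : ℝ × ℝ => F p.1 p.2)
    (hF' : Continuous fun p : ℝ × ℝ => F' p.1 p.2)
    (hd : ∀ t y, HasDerivAt (fun y => F y t) (F' y t) y) (y₀ : ℝ) :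
    HasDerivAt (fun y => ∫ t in (0:ℝ)..c, F y t) (∫ t in (0:ℝ)..c, F' y₀ t) y₀ := by
  obtain ⟨M, hM⟩ := ((isCompact_Icc (a := y₀ - 1) (b := y₀ + 1)).prod
      (isCompact_uIcc (a := (0:ℝ)) (b := c))).exists_bound_of_continuousOn hF'.continuousOn
  refine (intervalIntegral.hasDerivAt_integral_of_dominated_loc_of_deriv_le
      (F := F) (F' := F') (bound := fun _ => M) (Metric.ball_mem_nhds y₀ one_pos) ?_ ?_ ?_ ?_ ?_ ?_).2
  · exact Filter.Eventually.of_forall fun x =>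
      (hF.comp (Continuous.prodMk_right x)).aestronglyMeasurable
  · exact (hF.comp (Continuous.prodMk_right y₀)).intervalIntegrable 0 c
  · exact (hF'.comp (Continuous.prodMk_right y₀)).aestronglyMeasurable
  · refine Filter.Eventually.of_forall fun t ht x hx => ?_
    have hx' : |x - y₀| < 1 := by
      have := Metric.mem_ball.1 hx
      rwa [Real.dist_eq] at this
    have h1 := (abs_lt.1 hx').1
    have h2 := (abs_lt.1 hx').2
    exact hM (x, t) ⟨⟨by linarith, by linarith⟩, uIoc_subset_uIcc ht⟩
  · exact intervalIntegrable_const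
  · exact Filter.Eventually.of_forall fun t _ x _ => hd t x

lemma hasDerivAt_Av (hg : Continuous g) (y₀ : ℝ) :
    HasDerivAt (Av c g) (Av' c g y₀) y₀ := by
  have hGf : Continuous (Gf c g) := cont_Gf hg
  have hF : Continuous fun p : ℝ × ℝ =>
      p.2 * p.1 * Gf c g (p.2 * p.1) * g p.2 :=
    (((continuous_snd.mul continuous_fst).mul
      (hGf.comp (continuous_snd.mul continuous_fst))).mul (hg.comp continuous_snd))
  have hF' : Continuous fun p : ℝ × ℝ =>
      (p.2 * Gf c g (p.2 * p.1) - p.2 ^ 2 * p.1 * g (p.2 * p.1)) * g p.2 := by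
    refine Continuous.mul (Continuous.sub ?_ ?_) (hg.comp continuous_snd)
    · exact continuous_snd.mul (hGf.comp (continuous_snd.mul continuous_fst))
    · exact ((continuous_snd.pow 2).mul continuous_fst).mul
        (hg.comp (continuous_snd.mul continuous_fst))
  have hd : ∀ t y : ℝ, HasDerivAt (fun y => t * y * Gf c g (t * y) * g t)
      ((t * Gf c g (t * y) - t ^ 2 * y * g (t * y)) * g t) y := by
    intro t y
    have h1 : HasDerivAt (fun y : ℝ => t * y) t y := by
      simpa using (hasDerivAt_id y).const_mul t
    have h2 : HasDerivAt (fun y => Gf c g (t * y)) (-g (t * y) * t) y :=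
      (hasDerivAt_Gf hg (t * y)).comp y h1
    have h3 := (h1.mul h2).mul_const (g t)
    exact h3.congr_deriv (by ring)
  exact hasDerivAt_param (F := fun y t => t * y * Gf c g (t * y) * g t)
    (F' := fun y t => (t * Gf c g (t * y) - t ^ 2 * y * g (t * y)) * g t) hF hF' hd y₀

lemma hasDerivAt_Bv (hg : Continuous g) (y₀ : ℝ) :
    HasDerivAt (Bv c g) (Jv c g y₀) y₀ := by
  have hGf : Continuous (Gf c g) := cont_Gf hg
  have hF : Continuous fun p : ℝ × ℝ =>
      Gf c g (p.2 * p.1) * (Gf c g p.2 - p.2 * g p.2) :=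
    (hGf.comp (continuous_snd.mul continuous_fst)).mul
      ((hGf.comp continuous_snd).sub (continuous_snd.mul (hg.comp continuous_snd)))
  have hF' : Continuous fun p : ℝ × ℝ =>
      (p.2 * g (p.2 * p.1)) * (p.2 * g p.2 - Gf c g p.2) :=
    (continuous_snd.mul (hg.comp (continuous_snd.mul continuous_fst))).mul
      ((continuous_snd.mul (hg.comp continuous_snd)).sub (hGf.comp continuous_snd))
  have hd : ∀ t y : ℝ, HasDerivAt (fun y => Gf c g (t * y) * (Gf c g t - t * g t))
      ((t * g (t * y)) * (t * g t - Gf c g t)) y := by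
    intro t y
    have h1 : HasDerivAt (fun y : ℝ => t * y) t y := by
      simpa using (hasDerivAt_id y).const_mul t
    have h2 : HasDerivAt (fun y => Gf c g (t * y)) (-g (t * y) * t) y :=
      (hasDerivAt_Gf hg (t * y)).comp y h1
    have h3 := h2.mul_const (Gf c g t - t * g t)
    exact h3.congr_deriv (by ring)
  exact hasDerivAt_param (F := fun y t => Gf c g (t * y) * (Gf c g t - t * g t))
    (F' := fun y t => (t * g (t * y)) * (t * g t - Gf c g t)) hF hF' hd y₀

/-- Substitution plus integration by parts: the second `gRev` term equals `Bv`. -/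
lemma second_term_eq (hg : Continuous g) {y : ℝ} (hy : 0 < y) :
    (∫ v in (0:ℝ)..(c*y), (v / y) * Gf c g (v / y) * g v) = Bv c g y := by
  have hGf : Continuous (Gf c g) := cont_Gf hg
  -- substitution v = x * y
  have key := integral_comp_mul_right (a := (0:ℝ)) (b := c)
      (f := fun v => (v / y) * Gf c g (v / y) * g v) hy.ne'
  simp only [smul_eq_mul, zero_mul] at key
  have key2 : (∫ x in (0:ℝ)..c, x * y / y * Gf c g (x * y / y) * g (x * y))
      = ∫ x in (0:ℝ)..c, (x * Gf c g x) * g (x * y) := by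
    apply integral_congr
    intro t _
    show t * y / y * Gf c g (t * y / y) * g (t * y) = (t * Gf c g t) * g (t * y)
    rw [mul_div_cancel_right₀ _ hy.ne']
  -- integration by parts
  have hu : ∀ t ∈ uIcc (0:ℝ) c, HasDerivAt (fun t => t * Gf c g t)
      (Gf c g t - t * g t) t := by
    intro t _
    have h := (hasDerivAt_id t).mul (hasDerivAt_Gf (c := c) hg t)
    exact h.congr_deriv (by simp only [id_eq, one_mul]; ring)
  have hv : ∀ t ∈ uIcc (0:ℝ) c, HasDerivAt (fun t => -Gf c g (t * y))
      (y * g (t * y)) t := by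
    intro t _
    have h1 : HasDerivAt (fun t : ℝ => t * y) y t := by
      simpa using (hasDerivAt_id t).mul_const y
    have h2 := ((hasDerivAt_Gf (c := c) hg (t * y)).comp t h1).neg
    exact h2.congr_deriv (by ring)
  have hu' : IntervalIntegrable (fun t => Gf c g t - t * g t) volume 0 c :=
    (hGf.sub (continuous_id.mul hg)).intervalIntegrable 0 c
  have hv' : IntervalIntegrable (fun t => y * g (t * y)) volume 0 c :=
    (continuous_const.mul (hg.comp (continuous_id.mul continuous_const))).intervalIntegrable 0 c
  have hparts : (∫ t in (0:ℝ)..c, (t * Gf c g t) * (y * g (t * y)))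
      = (c * Gf c g c) * -Gf c g (c * y) - (0 * Gf c g 0) * -Gf c g (0 * y)
        - ∫ t in (0:ℝ)..c, (Gf c g t - t * g t) * -Gf c g (t * y) :=
    integral_mul_deriv_eq_deriv_mul hu hv hu' hv'
  calc (∫ v in (0:ℝ)..(c*y), (v / y) * Gf c g (v / y) * g v)
      = y * ∫ x in (0:ℝ)..c, x * y / y * Gf c g (x * y / y) * g (x * y) := by
        rw [key, ← mul_assoc, mul_inv_cancel₀ hy.ne', one_mul]
    _ = y * ∫ x in (0:ℝ)..c, (x * Gf c g x) * g (x * y) := by rw [key2]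
    _ = ∫ t in (0:ℝ)..c, (t * Gf c g t) * (y * g (t * y)) := by
        rw [← intervalIntegral.integral_const_mul]
        apply integral_congr
        intro t _
        show y * ((t * Gf c g t) * g (t * y)) = (t * Gf c g t) * (y * g (t * y))
        ring
    _ = Bv c g y := by
        rw [hparts, Gf_c]
        simp only [mul_zero, zero_mul, neg_zero, sub_zero, zero_sub]
        rw [← intervalIntegral.integral_neg]
        unfold Bv
        apply integral_congr
        intro t _
        show -((Gf c g t - t * g t) * -Gf c g (t * y))
            = Gf c g (t * y) * (Gf c g t - t * g t)
        ring

/-- The key positivity: at an interior critical point of `Av + l·Bv` with `l < 1`,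
under the MHR cross inequality, the derivative `Jv` of `Bv` is strictly positive. -/
lemma Jv_pos_of_foc (hc : 0 < c) (hg : Continuous g) (hg0 : ∀ u, 0 < g u)
    {y l : ℝ} (hy0 : 0 < y) (hy1 : y < 1) (hl0 : 0 ≤ l) (hl1 : l < 1)
    (hM : ∀ t ∈ Icc (0:ℝ) c, g (t * y) * Gf c g t ≤ g t * Gf c g (t * y))
    (hfoc : Av' c g y + l * Jv c g y = 0) :
    0 < Jv c g y := by
  have hGf : Continuous (Gf c g) := cont_Gf hg
  have hgy : Continuous fun t : ℝ => g (t * y) :=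
    hg.comp (continuous_id.mul continuous_const)
  have hGfy : Continuous fun t : ℝ => Gf c g (t * y) :=
    hGf.comp (continuous_id.mul continuous_const)
  set P := ∫ t in (0:ℝ)..c, t ^ 2 * g t * g (t * y) with hPdef
  set Q := ∫ t in (0:ℝ)..c, t * Gf c g t * g (t * y) with hQdef
  set S := ∫ t in (0:ℝ)..c, t * g t * Gf c g (t * y) with hSdef
  have iP : IntervalIntegrable (fun t => t ^ 2 * g t * g (t * y)) volume 0 c :=
    (((continuous_pow 2).mul hg).mul hgy).intervalIntegrable 0 c
  have iQ : IntervalIntegrable (fun t => t * Gf c g t * g (t * y)) volume 0 c :=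
    ((continuous_id.mul hGf).mul hgy).intervalIntegrable 0 c
  have iS : IntervalIntegrable (fun t => t * g t * Gf c g (t * y)) volume 0 c :=
    ((continuous_id.mul hg).mul hGfy).intervalIntegrable 0 c
  have hJ : Jv c g y = P - Q := by
    unfold Jv
    rw [hPdef, hQdef, ← integral_sub iP iQ]
    apply integral_congr
    intro t _
    show (t * g (t * y)) * (t * g t - Gf c g t)
        = t ^ 2 * g t * g (t * y) - t * Gf c g t * g (t * y)
    ring
  have hA : Av' c g y = S - y * P := by
    have iyP : IntervalIntegrable (fun t => y * (t ^ 2 * g t * g (t * y))) volume 0 c :=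
      (continuous_const.mul (((continuous_pow 2).mul hg).mul hgy)).intervalIntegrable 0 c
    unfold Av'
    rw [hSdef, hPdef, ← intervalIntegral.integral_const_mul, ← integral_sub iS iyP]
    apply integral_congr
    intro t _
    show (t * Gf c g (t * y) - t ^ 2 * y * g (t * y)) * g t
        = t * g t * Gf c g (t * y) - y * (t ^ 2 * g t * g (t * y))
    ring
  have hP : 0 < P := by
    refine intervalIntegral_pos_of_pos_on iP (fun t ht => ?_) hc
    show 0 < t ^ 2 * g t * g (t * y)
    exact mul_pos (mul_pos (pow_pos ht.1 2) (hg0 t)) (hg0 (t * y))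
  have hQ : 0 < Q := by
    refine intervalIntegral_pos_of_pos_on iQ (fun t ht => ?_) hc
    show 0 < t * Gf c g t * g (t * y)
    exact mul_pos (mul_pos ht.1 (Gf_pos hg hg0 ht.2)) (hg0 (t * y))
  have hQS : Q ≤ S := by
    refine integral_mono_on hc.le iQ iS fun t ht => ?_
    show t * Gf c g t * g (t * y) ≤ t * g t * Gf c g (t * y)
    have h := hM t ht
    nlinarith [mul_le_mul_of_nonneg_left h ht.1]
  by_contra hneg
  push_neg at hneg
  have hPQ : P ≤ Q := by
    rw [hJ] at hneg
    linarith
  have h1l : (0:ℝ) < 1 - l := by linarith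
  have hmul := mul_le_mul_of_nonneg_left hPQ h1l.le
  rw [hJ, hA] at hfoc
  nlinarith [hP, hQ, hQS, hmul, mul_pos (show (0:ℝ) < 1 - y by linarith) hP]

end OptSigAux

open OptSigAux

/-- If the optimal signal ratio function `x(·)` (selecting a maximizer of `g_f(·,l)` over
`[0,1]` for every `l`) is continuous and convex on `[0,1]`, takes values in `[0,1]`, and
satisfies `x(l) < 1` for `l < 1`, then it is strictly increasing on `[0,1]` —
provided `f` is a continuous, strictly positive MHR density on `[0,c]`. -/
theorem optimal_signal_ratio_strictMono (c : ℝ) (hc : 0 < c) (f : ℝ → ℝ)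
    (hf_cont : ContinuousOn f (Set.Icc 0 c))
    (hf_pos : ∀ v ∈ Set.Icc (0 : ℝ) c, 0 < f v)
    (hf_int : (∫ v in (0 : ℝ)..c, f v) = 1)
    (hMHR : ∀ v₁ ∈ Set.Icc (0 : ℝ) c, ∀ v₂ ∈ Set.Icc (0 : ℝ) c, v₁ ≤ v₂ →
      (∫ u in (0 : ℝ)..v₁, f u) < 1 → (∫ u in (0 : ℝ)..v₂, f u) < 1 →
      f v₁ / (1 - ∫ u in (0 : ℝ)..v₁, f u) ≤ f v₂ / (1 - ∫ u in (0 : ℝ)..v₂, f u))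
    (x : ℝ → ℝ)
    (hx_mem : ∀ l ∈ Set.Icc (0 : ℝ) 1, x l ∈ Set.Icc (0 : ℝ) 1)
    (hx_cont : ContinuousOn x (Set.Icc 0 1))
    (hx_convex : ConvexOn ℝ (Set.Icc 0 1) x)
    (hx_max : ∀ l ∈ Set.Icc (0 : ℝ) 1, ∀ y ∈ Set.Icc (0 : ℝ) 1,
      gRev c f y l ≤ gRev c f (x l) l)
    (hx_lt_one : ∀ l ∈ Set.Icc (0 : ℝ) 1, l < 1 → x l < 1) :
    StrictMonoOn x (Set.Icc 0 1) := by
  classical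
  -- continuous positive extension of f to all of ℝ
  set g : ℝ → ℝ := fun t => f (max 0 (min t c)) with hg_def
  have hmem : ∀ t : ℝ, max 0 (min t c) ∈ Icc (0:ℝ) c :=
    fun t => ⟨le_max_left _ _, max_le hc.le (min_le_right _ _)⟩
  have hg_cont : Continuous g :=
    hf_cont.comp_continuous (continuous_const.max (continuous_id.min continuous_const)) hmem
  have hg_pos : ∀ t, 0 < g t := fun t => hf_pos _ (hmem t)
  have hg_nonneg : ∀ t, 0 ≤ g t := fun t => (hg_pos t).le
  have hfg : ∀ v ∈ Icc (0:ℝ) c, f v = g v := by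
    intro v hv
    simp only [hg_def]
    rw [min_eq_left hv.2, max_eq_right hv.1]
  -- integral congruences
  have hIccU : Icc (0:ℝ) c = uIcc (0:ℝ) c := (uIcc_of_le hc.le).symm
  have hint_congr : ∀ a b : ℝ, a ∈ Icc (0:ℝ) c → b ∈ Icc (0:ℝ) c →
      (∫ u in a..b, f u) = ∫ u in a..b, g u := by
    intro a b ha hb
    apply integral_congr
    intro u hu
    apply hfg
    rw [hIccU]
    exact uIcc_subset_uIcc (hIccU ▸ ha) (hIccU ▸ hb) hu
  have hmemc : c ∈ Icc (0:ℝ) c := ⟨hc.le, le_refl c⟩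
  have hmem0 : (0:ℝ) ∈ Icc (0:ℝ) c := ⟨le_refl 0, hc.le⟩
  have hgint : (∫ u in (0:ℝ)..c, g u) = 1 := by
    rw [← hint_congr 0 c hmem0 hmemc]
    exact hf_int
  have hGrel : ∀ v ∈ Icc (0:ℝ) c, 1 - (∫ u in (0:ℝ)..v, f u) = Gf c g v := by
    intro v hv
    have hadd : (∫ u in (0:ℝ)..v, g u) + (∫ u in v..c, g u) = ∫ u in (0:ℝ)..c, g u :=
      integral_add_adjacent_intervals (hg_cont.intervalIntegrable _ _)
        (hg_cont.intervalIntegrable _ _)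
    rw [hgint] at hadd
    rw [hint_congr 0 v hmem0 hv]
    show 1 - (∫ u in (0:ℝ)..v, g u) = ∫ u in v..c, g u
    linarith
  have hGfeq : ∀ a ∈ Icc (0:ℝ) c, (∫ u in a..c, f u) = Gf c g a := by
    intro a ha
    show (∫ u in a..c, f u) = ∫ u in a..c, g u
    exact hint_congr a c ha hmemc
  -- MHR cross inequality
  have hMy : ∀ y : ℝ, 0 < y → y < 1 → ∀ t ∈ Icc (0:ℝ) c,
      g (t * y) * Gf c g t ≤ g t * Gf c g (t * y) := by
    intro y hy0 hy1 t ht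
    have htyIcc : t * y ∈ Icc (0:ℝ) c := by
      constructor
      · exact mul_nonneg ht.1 hy0.le
      · exact le_trans (mul_le_of_le_one_right ht.1 hy1.le) ht.2
    rcases eq_or_lt_of_le ht.2 with h | h
    · -- t = c
      rw [h] at htyIcc ⊢
      rw [Gf_c, mul_zero]
      exact mul_nonneg (hg_nonneg c) (Gf_nonneg hg_nonneg htyIcc.2)
    · -- t < c
      have hty : t * y ≤ t := mul_le_of_le_one_right ht.1 hy1.le
      have htyc : t * y < c := lt_of_le_of_lt hty h
      have hGt : 0 < Gf c g t := Gf_pos hg_cont hg_pos h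
      have hGty : 0 < Gf c g (t * y) := Gf_pos hg_cont hg_pos htyc
      have h1 : (∫ u in (0:ℝ)..(t * y), f u) < 1 := by
        have := hGrel (t * y) htyIcc
        linarith
      have h2 : (∫ u in (0:ℝ)..t, f u) < 1 := by
        have := hGrel t ht
        linarith
      have hm := hMHR (t * y) htyIcc t ht hty h1 h2
      rw [hGrel (t * y) htyIcc, hGrel t ht, hfg (t * y) htyIcc, hfg t ht] at hm
      exact (div_le_div_iff₀ hGty hGt).1 hm
  -- gRev identity
  have hgRev : ∀ y : ℝ, 0 < y → y ≤ 1 → ∀ l : ℝ,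
      gRev c f y l = Av c g y + l * Bv c g y := by
    intro y hy0 hy1 l
    unfold gRev
    congr 1
    · -- first term
      unfold Av
      apply integral_congr
      intro v hv
      rw [← hIccU] at hv
      have hvy : v * y ∈ Icc (0:ℝ) c := by
        constructor
        · exact mul_nonneg hv.1 hy0.le
        · exact le_trans (mul_le_of_le_one_right hv.1 hy1) hv.2
      show v * y * (∫ u in (v * y)..c, f u) * f v = v * y * Gf c g (v * y) * g v
      rw [hGfeq (v * y) hvy, hfg v hv]
    · -- second term
      congr 1
      have hcy : (0:ℝ) ≤ c * y := by positivity
      have hstep : (∫ v in (0:ℝ)..(c * y), (v / y) * (∫ u in (v / y)..c, f u) * f v)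
          = ∫ v in (0:ℝ)..(c * y), (v / y) * Gf c g (v / y) * g v := by
        apply integral_congr
        intro v hv
        rw [uIcc_of_le hcy] at hv
        have hvIcc : v ∈ Icc (0:ℝ) c := by
          constructor
          · exact hv.1
          · nlinarith [hv.2, hy0, hy1]
        have hvy : v / y ∈ Icc (0:ℝ) c := by
          constructor
          · exact div_nonneg hv.1 hy0.le
          · rw [div_le_iff₀ hy0]
            linarith [hv.2]
        show (v / y) * (∫ u in (v / y)..c, f u) * f v = (v / y) * Gf c g (v / y) * g v
        rw [hGfeq (v / y) hvy, hfg v hvIcc]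
      rw [hstep]
      exact second_term_eq hg_cont hy0
  -- positivity of Av on (0,1]
  have hAvpos : ∀ y : ℝ, 0 < y → y ≤ 1 → 0 < Av c g y := by
    intro y hy0 hy1
    unfold Av
    refine intervalIntegral_pos_of_pos_on ?_ (fun t ht => ?_) hc
    · exact ((((continuous_id.mul continuous_const).mul
        ((cont_Gf hg_cont).comp (continuous_id.mul continuous_const))).mul
          hg_cont)).intervalIntegrable 0 c
    · show 0 < t * y * Gf c g (t * y) * g t
      have hty : t * y < c :=
        lt_of_le_of_lt (mul_le_of_le_one_right ht.1.le hy1) ht.2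
      exact mul_pos (mul_pos (mul_pos ht.1 hy0) (Gf_pos hg_cont hg_pos hty)) (hg_pos t)
  -- Bv 1 nonnegative
  have hBv1 : 0 ≤ Bv c g 1 := by
    rw [← second_term_eq hg_cont one_pos]
    refine integral_nonneg (by nlinarith : (0:ℝ) ≤ c * 1) fun u hu => ?_
    have h2 : u / 1 ≤ c := by
      rw [div_one]
      linarith [hu.2]
    have h1 : 0 ≤ u / 1 := by
      rw [div_one]
      exact hu.1
    exact mul_nonneg (mul_nonneg h1 (Gf_nonneg hg_nonneg h2)) (hg_nonneg u)
  -- gRev at signal ratio 0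
  have hgRev0 : ∀ l : ℝ, gRev c f 0 l = 0 := by
    intro l
    simp [gRev]
  -- x l > 0
  have hx_pos : ∀ l ∈ Icc (0:ℝ) 1, 0 < x l := by
    intro l hl
    rcases (hx_mem l hl).1.lt_or_eq with h | h
    · exact h
    · exfalso
      have h1 : gRev c f 1 l ≤ gRev c f (x l) l :=
        hx_max l hl 1 ⟨zero_le_one, le_refl 1⟩
      have h2 : gRev c f (x l) l = 0 := by
        rw [← h]
        exact hgRev0 l
      have h3 : 0 < gRev c f 1 l := by
        rw [hgRev 1 one_pos le_rfl l]
        have hA1 := hAvpos 1 one_pos le_rfl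
        nlinarith [mul_nonneg hl.1 hBv1]
      linarith
  -- first-order condition at interior optimizers
  have hFOC : ∀ l ∈ Icc (0:ℝ) 1, x l < 1 →
      Av' c g (x l) + l * Jv c g (x l) = 0 := by
    intro l hl h1
    have h0 : 0 < x l := hx_pos l hl
    have hloc : IsLocalMax (fun y => Av c g y + l * Bv c g y) (x l) := by
      have hnhds : Ioo (0:ℝ) 1 ∈ nhds (x l) := isOpen_Ioo.mem_nhds ⟨h0, h1⟩
      filter_upwards [hnhds] with y hy
      have hmax := hx_max l hl y ⟨hy.1.le, hy.2.le⟩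
      rwa [hgRev y hy.1 hy.2.le l, hgRev (x l) h0 (hx_mem l hl).2 l] at hmax
    exact hloc.hasDerivAt_eq_zero
      ((hasDerivAt_Av hg_cont (x l)).add ((hasDerivAt_Bv hg_cont (x l)).const_mul l))
  -- positivity of Jv at optimizers for l < 1
  have hJpos : ∀ l ∈ Icc (0:ℝ) 1, l < 1 → 0 < Jv c g (x l) := by
    intro l hl hl1
    have h0 := hx_pos l hl
    have h1 := hx_lt_one l hl hl1
    exact Jv_pos_of_foc hc hg_cont hg_pos h0 h1 hl.1 hl1
      (hMy (x l) h0 h1) (hFOC l hl h1)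
  -- continuity of Bv
  have hBvcont : Continuous (Bv c g) :=
    continuous_iff_continuousAt.2 fun ξ =>
      (hasDerivAt_Bv hg_cont ξ).differentiableAt.continuousAt
  -- main argument
  intro a ha b hb hab
  by_contra hcon
  push_neg at hcon
  have ha1 : a < 1 := lt_of_lt_of_le hab hb.2
  rcases hcon.lt_or_eq with hlt | heq
  · -- case x b < x a : exchange argument + strict monotonicity of Bv
    have hxa1 : x a < 1 := hx_lt_one a ha ha1
    have hJIoo : ∀ ξ ∈ Ioo (x b) (x a), 0 < Jv c g ξ := by
      intro ξ hξ
      have hsub : Icc a b ⊆ Icc (0:ℝ) 1 := Icc_subset_Icc ha.1 hb.2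
      have hIVT := intermediate_value_Icc' hab.le (hx_cont.mono hsub)
      obtain ⟨l, hlmem, hlx⟩ := hIVT ⟨hξ.1.le, hξ.2.le⟩
      have hl01 : l ∈ Icc (0:ℝ) 1 := hsub hlmem
      have hl1 : l < 1 := by
        rcases lt_or_eq_of_le hl01.2 with h | h
        · exact h
        · exfalso
          have hb1 : b = 1 := le_antisymm hb.2 (h ▸ hlmem.2)
          have hxx : x l = x b := by rw [h, hb1]
          rw [hlx] at hxx
          linarith [hξ.1]
      have := hJpos l hl01 hl1
      rwa [hlx] at this
    have hBmono : StrictMonoOn (Bv c g) (Icc (x b) (x a)) := by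
      apply strictMonoOn_of_deriv_pos (convex_Icc _ _) hBvcont.continuousOn
      intro ξ hξ
      rw [interior_Icc] at hξ
      rw [(hasDerivAt_Bv hg_cont ξ).deriv]
      exact hJIoo ξ hξ
    have hBlt : Bv c g (x b) < Bv c g (x a) :=
      hBmono ⟨le_refl _, hlt.le⟩ ⟨hlt.le, le_refl _⟩ hlt
    have e1 := hx_max a ha (x b) (hx_mem b hb)
    have e2 := hx_max b hb (x a) (hx_mem a ha)
    rw [hgRev (x b) (hx_pos b hb) (hx_mem b hb).2 a,
        hgRev (x a) (hx_pos a ha) (hx_mem a ha).2 a] at e1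
    rw [hgRev (x a) (hx_pos a ha) (hx_mem a ha).2 b,
        hgRev (x b) (hx_pos b hb) (hx_mem b hb).2 b] at e2
    nlinarith [mul_pos (sub_pos.2 hab) (sub_pos.2 hBlt)]
  · -- case x b = x a : two first-order conditions give Jv = 0, contradiction
    have hxa1 : x a < 1 := hx_lt_one a ha ha1
    have hfa := hFOC a ha hxa1
    have hfb := hFOC b hb (by rw [heq]; exact hxa1)
    rw [heq] at hfb
    have hJ := hJpos a ha ha1
    have hzero : (b - a) * Jv c g (x a) = 0 := by linarith
    have hba : b - a ≠ 0 := by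
      have : a < b := hab
      linarith
    have hJ0 : Jv c g (x a) = 0 := by
      rcases mul_eq_zero.1 hzero with h | h
      · exact absurd h hba
      · exact h
    linarith
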